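/- arXiv:1012.0725 — 4 statements merged into one kernel-verified Lean document; each statement's English description precedes it below -/
import Mathlib

section
/- Let O_F be a Dedekind domain with fraction field F, and let K be a quadratic field extension of F with O_K the integral closure of O_F in K. Then the map sending a nonzero ideal c ⊆ O_F to O_c = O_F + c·O_K is a bijection from the set of nonzero ideals of O_F onto the set of O_F-orders in K (i.e., O_F-subalgebras of K that are finitely generated O_F-modules spanning K over F). -/
open Module Submodule

/-- The `O_F`-submodule `O_F + c·O_K` of `K` attached to an ideal `c` of `O_F`. -/
def orderSubmodule (O_F F K : Type*) [CommRing O_F] [Field F] [Field K]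
    [Algebra O_F F] [Algebra F K] [Algebra O_F K] [IsScalarTower O_F F K]
    (c : Ideal O_F) : Submodule O_F K :=
  (1 : Submodule O_F K) ⊔ c • (Subalgebra.toSubmodule (integralClosure O_F K))

/-- An `O_F`-order in `K`: an `O_F`-submodule of `K` containing `1`, closed under
multiplication, finitely generated as an `O_F`-module, and spanning `K` over `F`. -/
def IsOrderIn (O_F F K : Type*) [CommRing O_F] [Field F] [Field K]
    [Algebra O_F F] [Algebra F K] [Algebra O_F K] [IsScalarTower O_F F K]
    (S : Submodule O_F K) : Prop :=
  (1 : K) ∈ S ∧ (∀ x ∈ S, ∀ y ∈ S, x * y ∈ S) ∧ S.FG ∧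
    Submodule.span F (S : Set K) = ⊤

/-- The product of the image of an ideal with a submodule is the ideal-scalar product. -/
theorem ideal_map_mul_eq_smul {R A : Type*} [CommSemiring R] [CommSemiring A] [Algebra R A]
    (c : Ideal R) (N : Submodule R A) :
    Submodule.map (Algebra.linearMap R A) c * N = c • N := by
  apply le_antisymm
  · rw [Submodule.mul_le]
    rintro x hx y hy
    obtain ⟨a, ha, rfl⟩ := Submodule.mem_map.mp hx
    have : (Algebra.linearMap R A) a * y = a • y := by
      rw [Algebra.linearMap_apply, ← Algebra.smul_def]
    rw [this]
    exact Submodule.smul_mem_smul ha hy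
  · rw [Submodule.smul_le]
    intro r hr n hn
    rw [Algebra.smul_def]
    exact Submodule.mul_mem_mul (Submodule.mem_map_of_mem hr) hn

/-- over a Dedekind domain `O_F` with fraction field `F` and a separable
quadratic field extension `K/F`, the map `c ↦ O_F + c·O_K` is a bijection from the set of
nonzero ideals of `O_F` onto the set of `O_F`-orders in `K`. -/
theorem orders_biject_nonzero_ideals
    (O_F F K : Type*) [CommRing O_F] [IsDomain O_F] [IsDedekindDomain O_F]
    [Field F] [Algebra O_F F] [IsFractionRing O_F F]
    [Field K] [Algebra F K] [Algebra O_F K] [IsScalarTower O_F F K]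
    [Algebra.IsSeparable F K] (hquad : Module.finrank F K = 2) :
    (∀ c : Ideal O_F, c ≠ ⊥ → IsOrderIn O_F F K (orderSubmodule O_F F K c)) ∧
    (∀ S : Submodule O_F K, IsOrderIn O_F F K S →
      ∃! c : Ideal O_F, c ≠ ⊥ ∧ orderSubmodule O_F F K c = S) := by
  haveI : FiniteDimensional F K := FiniteDimensional.of_finrank_eq_succ hquad
  have hinjFK : Function.Injective (algebraMap F K) := (algebraMap F K).injective
  have hinjOF : Function.Injective (algebraMap O_F F) := IsFractionRing.injective O_F F
  have hinjOK : Function.Injective (algebraMap O_F K) := by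
    rw [IsScalarTower.algebraMap_eq O_F F K]
    exact hinjFK.comp hinjOF
  haveI hNoe : IsNoetherian O_F (integralClosure O_F K) :=
    IsIntegralClosure.isNoetherian O_F F K (integralClosure O_F K)
  set B : Submodule O_F K := Subalgebra.toSubmodule (integralClosure O_F K) with hBdef
  have hcBle : ∀ c : Ideal O_F, c • B ≤ B :=
    fun c => Submodule.smul_le.mpr fun r _ n hn => B.smul_mem r hn
  have hBfg : B.FG := by
    have h1 : (⊤ : Submodule O_F (integralClosure O_F K)).FG := IsNoetherian.noetherian ⊤
    have h2 := h1.map ((integralClosure O_F K).val.toLinearMap)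
    have hBmap : B = Submodule.map ((integralClosure O_F K).val.toLinearMap) ⊤ := by
      ext x
      simp only [Submodule.mem_map, Submodule.mem_top, true_and]
      constructor
      · intro hx
        exact ⟨⟨x, hx⟩, rfl⟩
      · rintro ⟨y, rfl⟩
        exact y.2
    rw [hBmap]
    exact h2
  have hspanB : Submodule.span F (B : Set K) = ⊤ := by
    rw [eq_top_iff]
    rintro x -
    have halgF : IsAlgebraic F x := Algebra.IsAlgebraic.isAlgebraic x
    have halg : IsAlgebraic O_F x := (IsFractionRing.isAlgebraic_iff O_F F K).mpr halgF
    obtain ⟨y, d, hd0, hdx⟩ : ∃ y : integralClosure O_F K, ∃ d : O_F, d ≠ 0 ∧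
        algebraMap O_F K d * x = y := by
      obtain ⟨d, hd0, hdint⟩ := halg.exists_integral_multiple
      exact ⟨⟨d • x, hdint⟩, d, hd0, (Algebra.smul_def d x).symm⟩
    have hdF : algebraMap O_F F d ≠ 0 := fun h => hd0 (hinjOF (by rw [h, map_zero]))
    have hdK : algebraMap F K (algebraMap O_F F d) ≠ 0 := by
      simpa using hdF
    have hyx : (y : K) = algebraMap F K (algebraMap O_F F d) * x := by
      rw [← IsScalarTower.algebraMap_apply, hdx]
    have hx : x = (algebraMap O_F F d)⁻¹ • (y : K) := by
      rw [Algebra.smul_def, hyx, map_inv₀, inv_mul_cancel_left₀ hdK]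
    rw [hx]
    exact Submodule.smul_mem _ _ (Submodule.subset_span y.2)
  -- construction of the O_F-linear functional φ : K → F with kernel F·1
  set W : Submodule F K := Submodule.span F {(1 : K)} with hWdef
  have hW1 : finrank F W = 1 := finrank_span_singleton one_ne_zero
  have hWQ : finrank F (K ⧸ W) = 1 := by
    have h := W.finrank_quotient_add_finrank
    rw [hquad, hW1] at h
    omega
  obtain ⟨ψ⟩ : Nonempty ((K ⧸ W) ≃ₗ[F] F) :=
    FiniteDimensional.nonempty_linearEquiv_of_finrank_eq (by rw [hWQ, finrank_self])
  set φF : K →ₗ[F] F := ψ.toLinearMap ∘ₗ W.mkQ with hφF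
  have hkerφF : LinearMap.ker φF = W := by
    rw [hφF, LinearMap.ker_comp, LinearEquiv.ker, Submodule.comap_bot, Submodule.ker_mkQ]
  set φ : K →ₗ[O_F] F := φF.restrictScalars O_F with hφdef
  have hφker : ∀ x : K, φ x = 0 ↔ x ∈ W := by
    intro x
    rw [← hkerφF]
    exact Iff.rfl
  have hφ1 : φ (1 : K) = 0 := (hφker 1).mpr (Submodule.mem_span_singleton_self 1)
  have hkey : ∀ x ∈ B, ∀ y ∈ B, φ x = φ y → ∃ r : O_F, x = y + algebraMap O_F K r := by
    intro x hx y hy hxy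
    have hsub : x - y ∈ W := by
      rw [← hkerφF, LinearMap.mem_ker, map_sub]
      have : φF x = φF y := hxy
      rw [this, sub_self]
    obtain ⟨a, ha⟩ := Submodule.mem_span_singleton.mp hsub
    have haK : x - y = algebraMap F K a := by rw [← ha, Algebra.smul_def, mul_one]
    have hint : IsIntegral O_F (x - y) := sub_mem hx hy
    have hintA : IsIntegral O_F a := IsIntegral.tower_bot_of_field (by rwa [← haK])
    obtain ⟨r, hr⟩ := IsIntegrallyClosed.isIntegral_iff.mp hintA
    refine ⟨r, ?_⟩
    have : algebraMap O_F K r = x - y := by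
      rw [IsScalarTower.algebraMap_apply O_F F K, hr, ← haK]
    rw [this]
    ring
  have hdet_le : ∀ S T : Submodule O_F K, S ≤ B → T ≤ B → (1 : K) ∈ T →
      Submodule.map φ S ≤ Submodule.map φ T → S ≤ T := by
    intro S T hSB hTB h1T hmap x hx
    obtain ⟨y, hyT, hyx⟩ := Submodule.mem_map.mp (hmap (Submodule.mem_map_of_mem hx))
    obtain ⟨r, hr⟩ := hkey x (hSB hx) y (hTB hyT) hyx.symm
    rw [hr, Algebra.algebraMap_eq_smul_one]
    exact T.add_mem hyT (T.smul_mem r h1T)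
  set b : Submodule O_F F := Submodule.map φ B with hbdef
  have hbfg : b.FG := hBfg.map φ
  have himgne : ∀ S : Submodule O_F K, Submodule.span F (S : Set K) = ⊤ →
      Submodule.map φ S ≠ ⊥ := by
    intro S hspan hbot
    have hsub : (S : Set K) ⊆ (W : Set K) := by
      intro x hx
      have hφx : φ x ∈ Submodule.map φ S := Submodule.mem_map_of_mem hx
      rw [hbot, Submodule.mem_bot] at hφx
      exact (hφker x).mp hφx
    have htop : (⊤ : Submodule F K) ≤ W := by
      rw [← hspan]
      exact Submodule.span_le.mpr hsub
    have hWtop : W = ⊤ := top_le_iff.mp htop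
    rw [hWtop, finrank_top, hquad] at hW1
    omega
  have hbne : b ≠ ⊥ := himgne B hspanB
  have hφone : Submodule.map φ (1 : Submodule O_F K) = ⊥ := by
    rw [Submodule.one_eq_span, Submodule.map_span]
    simp [hφ1]
  have himage : ∀ c : Ideal O_F, Submodule.map φ (orderSubmodule O_F F K c) = c • b := by
    intro c
    simp only [orderSubmodule]
    rw [← hBdef, Submodule.map_sup, hφone, Submodule.map_smul'', bot_sup_eq, ← hbdef]
  have hOle : ∀ c : Ideal O_F, orderSubmodule O_F F K c ≤ B := by
    intro c
    simp only [orderSubmodule]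
    rw [← hBdef]
    exact sup_le (Submodule.one_le.mpr (one_mem (integralClosure O_F K))) (hcBle c)
  have h1O : ∀ c : Ideal O_F, (1 : K) ∈ orderSubmodule O_F F K c := by
    intro c
    simp only [orderSubmodule]
    exact Submodule.mem_sup_left (Submodule.mem_one.mpr ⟨1, map_one _⟩)
  have hmem_smul : ∀ c : Ideal O_F, c • B ≤ orderSubmodule O_F F K c := by
    intro c
    simp only [orderSubmodule]
    rw [← hBdef]
    exact le_sup_right
  -- fractional ideal machinery
  let bf : FractionalIdeal (nonZeroDivisors O_F) F := ⟨b, FractionalIdeal.isFractional_of_fg hbfg⟩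
  have hbf0 : bf ≠ 0 := by
    intro h
    apply hbne
    have := congrArg (fun I : FractionalIdeal (nonZeroDivisors O_F) F => (I : Submodule O_F F)) h
    exact (by simpa using this : (bf : Submodule O_F F) = ⊥)
  have hbridge : ∀ c : Ideal O_F,
      (((c : FractionalIdeal (nonZeroDivisors O_F) F) * bf :
        FractionalIdeal (nonZeroDivisors O_F) F) : Submodule O_F F) = c • b := by
    intro c
    rw [FractionalIdeal.coe_mul, FractionalIdeal.coe_coeIdeal, ← ideal_map_mul_eq_smul]
    rfl
  have hinj_smul : ∀ c c' : Ideal O_F, c • b = c' • b → c = c' := by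
    intro c c' h
    have h2 : (c : FractionalIdeal (nonZeroDivisors O_F) F) * bf
        = (c' : FractionalIdeal (nonZeroDivisors O_F) F) * bf := by
      apply FractionalIdeal.coeToSubmodule_injective
      show ((↑c * bf : FractionalIdeal (nonZeroDivisors O_F) F) : Submodule O_F F)
        = ((↑c' * bf : FractionalIdeal (nonZeroDivisors O_F) F) : Submodule O_F F)
      rw [hbridge c, hbridge c', h]
    have h3 : (c : FractionalIdeal (nonZeroDivisors O_F) F)
        = (c' : FractionalIdeal (nonZeroDivisors O_F) F) := by
      have h4 := congrArg (· * bf⁻¹) h2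
      simpa [mul_assoc, mul_inv_cancel₀ hbf0] using h4
    exact FractionalIdeal.coeIdeal_injective h3
  have hmulB : ∀ c : Ideal O_F, ∀ z ∈ c • B, ∀ w ∈ B, z * w ∈ c • B := by
    intro c z hz w hw
    refine Submodule.smul_induction_on hz ?_ ?_
    · intro r hr n hn
      rw [smul_mul_assoc]
      exact Submodule.smul_mem_smul hr
        ((Subalgebra.mem_toSubmodule _).mpr
          (mul_mem ((Subalgebra.mem_toSubmodule _).mp hn) ((Subalgebra.mem_toSubmodule _).mp hw)))
    · intro z1 z2 h1 h2
      rw [add_mul]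
      exact Submodule.add_mem _ h1 h2
  constructor
  · -- forward direction: each nonzero ideal gives an order
    intro c hc
    refine ⟨h1O c, ?_, ?_, ?_⟩
    · -- closed under multiplication
      intro x hx y hy
      simp only [orderSubmodule] at hx hy ⊢
      rw [← hBdef] at hx hy ⊢
      obtain ⟨u, hu, v, hv, rfl⟩ := Submodule.mem_sup.mp hx
      obtain ⟨u', hu', v', hv', rfl⟩ := Submodule.mem_sup.mp hy
      obtain ⟨r, hr⟩ := Submodule.mem_one.mp hu
      obtain ⟨r', hr'⟩ := Submodule.mem_one.mp hu'
      rw [add_mul, mul_add, mul_add]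
      refine Submodule.add_mem _ (Submodule.add_mem _ ?_ ?_) (Submodule.add_mem _ ?_ ?_)
      · exact Submodule.mem_sup_left (Submodule.mem_one.mpr ⟨r * r', by rw [map_mul, hr, hr']⟩)
      · refine Submodule.mem_sup_right ?_
        rw [← hr, ← Algebra.smul_def]
        exact Submodule.smul_mem _ r hv'
      · refine Submodule.mem_sup_right ?_
        rw [← hr', mul_comm, ← Algebra.smul_def]
        exact Submodule.smul_mem _ r' hv
      · exact Submodule.mem_sup_right (hmulB c v hv v' (hcBle c hv'))
    · -- finitely generated
      simp only [orderSubmodule]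
      rw [← hBdef]
      refine Submodule.FG.sup ?_ ?_
      · rw [Submodule.one_eq_span]
        exact Submodule.fg_span_singleton 1
      · rw [Submodule.smul_eq_map₂]
        exact Submodule.FG.map₂ _ (IsNoetherian.noetherian c) hBfg
    · -- spans K over F
      rw [eq_top_iff, ← hspanB]
      refine Submodule.span_le.mpr ?_
      intro m hm
      obtain ⟨a, ha, ha0⟩ := Submodule.exists_mem_ne_zero_of_ne_bot hc
      have haF : algebraMap O_F F a ≠ 0 := fun h => ha0 (hinjOF (by rw [h, map_zero]))
      have haK : algebraMap F K (algebraMap O_F F a) ≠ 0 := by simpa using haF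
      have h1 : a • m ∈ orderSubmodule O_F F K c :=
        hmem_smul c (Submodule.smul_mem_smul ha hm)
      have h2 : (a • m : K) = algebraMap F K (algebraMap O_F F a) * m := by
        rw [Algebra.smul_def, IsScalarTower.algebraMap_apply O_F F K]
      have h3 : m = (algebraMap O_F F a)⁻¹ • (a • m : K) := by
        rw [Algebra.smul_def (((algebraMap O_F F) a)⁻¹), h2, map_inv₀,
          inv_mul_cancel_left₀ haK]
      rw [h3]
      exact Submodule.smul_mem _ _ (Submodule.subset_span h1)
  · -- backward direction: each order comes from a unique nonzero ideal
    intro S hS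
    obtain ⟨h1S, hmulS, hfgS, hspanS⟩ := hS
    have hSB : S ≤ B := by
      intro x hx
      let S' : Subalgebra O_F K :=
        { carrier := S
          mul_mem' := fun {a b} ha hb => hmulS a ha b hb
          one_mem' := h1S
          add_mem' := fun {a b} ha hb => S.add_mem ha hb
          zero_mem' := S.zero_mem
          algebraMap_mem' := fun r => by
            have h := S.smul_mem r h1S
            rwa [Algebra.algebraMap_eq_smul_one] }
      have hS'S : Subalgebra.toSubmodule S' = S := SetLike.coe_injective rfl
      have hfg' : (Subalgebra.toSubmodule S').FG := by rw [hS'S]; exact hfgS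
      exact IsIntegral.of_mem_of_fg S' hfg' x hx
    set J : Submodule O_F F := Submodule.map φ S with hJdef
    have hJfg : J.FG := hfgS.map φ
    have hJb : J ≤ b := Submodule.map_mono hSB
    have hJne : J ≠ ⊥ := himgne S hspanS
    let Jf : FractionalIdeal (nonZeroDivisors O_F) F := ⟨J, FractionalIdeal.isFractional_of_fg hJfg⟩
    have hJf0 : Jf ≠ 0 := by
      intro h
      apply hJne
      have := congrArg (fun I : FractionalIdeal (nonZeroDivisors O_F) F => (I : Submodule O_F F)) h
      exact (by simpa using this : (Jf : Submodule O_F F) = ⊥)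
    have hJfb : Jf * bf⁻¹ ≤ 1 := by
      have h1 : Jf ≤ bf := by
        rw [← FractionalIdeal.coe_le_coe]
        exact hJb
      calc Jf * bf⁻¹ ≤ bf * bf⁻¹ := by gcongr
        _ = 1 := mul_inv_cancel₀ hbf0
    obtain ⟨c, hc⟩ := FractionalIdeal.le_one_iff_exists_coeIdeal.mp hJfb
    have hcbJ : (c : FractionalIdeal (nonZeroDivisors O_F) F) * bf = Jf := by
      rw [hc, mul_assoc, mul_comm bf⁻¹ bf, mul_inv_cancel₀ hbf0, mul_one]
    have hc0 : c ≠ ⊥ := by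
      rintro rfl
      rw [FractionalIdeal.coeIdeal_bot, zero_mul] at hcbJ
      exact hJf0 hcbJ.symm
    have hsmul : c • b = J := by
      rw [← hbridge c, hcbJ]
      rfl
    have hmapeq : Submodule.map φ (orderSubmodule O_F F K c) = Submodule.map φ S := by
      rw [himage c, hsmul, hJdef]
    have hOS : orderSubmodule O_F F K c = S :=
      le_antisymm (hdet_le _ _ (hOle c) hSB h1S hmapeq.le)
        (hdet_le _ _ hSB (hOle c) (h1O c) hmapeq.ge)
    refine ⟨c, ⟨hc0, hOS⟩, ?_⟩
    rintro c' ⟨hc'0, hOS'⟩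
    apply hinj_smul
    rw [← himage c', hOS', hsmul, hJdef]
end

section
/- Let O_F be a Dedekind domain with fraction field F, K a quadratic étale F-algebra, and V a free K-module of rank one. Two full O_F-lattices Λ₁, Λ₂ in V are K^×-homothetic (i.e., Λ₂ = λΛ₁ for some λ ∈ K^×) if and only if they have the same multiplier order O(Λ₁) = O(Λ₂) and define the same class in the Picard group of that order. -/
open Module Submodule

/-- The multiplier order `O(Λ) = {a ∈ K : aΛ ⊆ Λ}` of a lattice `Λ`,
as an `O_F`-subalgebra of `K`. -/
def multiplierOrder (K : Type*) {O_F V : Type*} [CommRing O_F] [CommRing K]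
    [Algebra O_F K] [AddCommGroup V] [Module K V] [Module O_F V]
    [IsScalarTower O_F K V] (Λ : Submodule O_F V) : Subalgebra O_F K where
  carrier := {a : K | ∀ x ∈ Λ, a • x ∈ Λ}
  add_mem' := fun {a b} ha hb x hx => by
    rw [add_smul]; exact Λ.add_mem (ha x hx) (hb x hx)
  mul_mem' := fun {a b} ha hb x hx => by
    rw [mul_smul]; exact ha _ (hb x hx)
  one_mem' := fun x hx => by rw [one_smul]; exact hx
  zero_mem' := fun x hx => by rw [zero_smul]; exact Λ.zero_mem
  algebraMap_mem' := fun r x hx => by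
    rw [algebraMap_smul]; exact Λ.smul_mem r hx

theorem exists_denom {O_F F V : Type*} [CommRing O_F] [IsDomain O_F] [Field F]
    [Algebra O_F F] [IsFractionRing O_F F] [AddCommGroup V] [Module F V] [Module O_F V]
    [IsScalarTower O_F F V] (Λ : Submodule O_F V) (hΛ : Submodule.span F (Λ : Set V) = ⊤)
    (v : V) : ∃ d : O_F, d ≠ 0 ∧ d • v ∈ Λ := by
  have hv : v ∈ Submodule.span F (Λ : Set V) := hΛ ▸ Submodule.mem_top
  induction hv using Submodule.span_induction with
  | mem x hx => exact ⟨1, one_ne_zero, by simpa using hx⟩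
  | zero => exact ⟨1, one_ne_zero, by simp⟩
  | add x y _ _ hx hy =>
      obtain ⟨d₁, hd₁, h₁⟩ := hx
      obtain ⟨d₂, hd₂, h₂⟩ := hy
      refine ⟨d₁ * d₂, mul_ne_zero hd₁ hd₂, ?_⟩
      rw [smul_add]
      have e1 : (d₁ * d₂) • x = d₂ • (d₁ • x) := by rw [mul_comm, mul_smul]
      have e2 : (d₁ * d₂) • y = d₁ • (d₂ • y) := by rw [mul_smul]
      rw [e1, e2]
      exact Λ.add_mem (Λ.smul_mem _ h₁) (Λ.smul_mem _ h₂)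
  | smul c x _ hx =>
      obtain ⟨d, hd, h⟩ := hx
      obtain ⟨⟨a, t⟩, ht⟩ := IsLocalization.surj (nonZeroDivisors O_F) c
      refine ⟨t * d, mul_ne_zero (nonZeroDivisors.ne_zero t.2) hd, ?_⟩
      have : (↑t * d) • (c • x) = a • (d • x) := by
        rw [← algebraMap_smul F (↑t * d : O_F) (c • x), ← algebraMap_smul F a (d • x),
            ← algebraMap_smul F d x, smul_smul, smul_smul, map_mul]
        congr 1
        linear_combination (algebraMap O_F F d) * ht
      rw [this]
      exact Λ.smul_mem _ h

theorem exists_denom_finset {O_F F V : Type*} [CommRing O_F] [IsDomain O_F] [Field F]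
    [Algebra O_F F] [IsFractionRing O_F F] [AddCommGroup V] [Module F V] [Module O_F V]
    [IsScalarTower O_F F V] (Λ : Submodule O_F V) (hΛ : Submodule.span F (Λ : Set V) = ⊤)
    (s : Finset V) : ∃ d : O_F, d ≠ 0 ∧ ∀ x ∈ s, d • x ∈ Λ := by
  classical
  induction s using Finset.induction_on with
  | empty => exact ⟨1, one_ne_zero, by simp⟩
  | @insert v s' hvs ih =>
      obtain ⟨d, hd, h⟩ := ih
      obtain ⟨d', hd', h'⟩ := exists_denom Λ hΛ v
      refine ⟨d * d', mul_ne_zero hd hd', ?_⟩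
      intro x hxm
      rcases Finset.mem_insert.mp hxm with rfl | hxs
      · rw [mul_smul]; exact Λ.smul_mem _ h'
      · rw [mul_comm, mul_smul]; exact Λ.smul_mem _ (h x hxs)

theorem exists_scalar_denom {O_F F K V : Type*} [CommRing O_F] [IsDomain O_F] [Field F]
    [Algebra O_F F] [IsFractionRing O_F F] [CommRing K] [Algebra O_F K]
    [AddCommGroup V] [Module K V] [Module F V] [Module O_F V]
    [IsScalarTower O_F F V] [IsScalarTower O_F K V]
    (Λ : Submodule O_F V) (hFG : Λ.FG) (hΛ : Submodule.span F (Λ : Set V) = ⊤)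
    (c : K) : ∃ d : O_F, d ≠ 0 ∧ ∀ y ∈ Λ, (algebraMap O_F K d * c) • y ∈ Λ := by
  classical
  obtain ⟨s, hs⟩ := hFG
  obtain ⟨d, hd, hds⟩ := exists_denom_finset Λ hΛ (s.image (fun x => c • x))
  refine ⟨d, hd, ?_⟩
  intro y hy
  have hy' : y ∈ Submodule.span O_F (s : Set V) := by rw [hs]; exact hy
  clear hy
  induction hy' using Submodule.span_induction with
  | mem x hx =>
      have : (algebraMap O_F K d * c) • x = d • (c • x) := by
        rw [mul_smul, algebraMap_smul]
      rw [this]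
      exact hds _ (Finset.mem_image_of_mem _ hx)
  | zero => simp
  | add u w _ _ hu hw =>
      rw [smul_add]
      exact Λ.add_mem hu hw
  | smul r u _ hu =>
      have : (algebraMap O_F K d * c) • (r • u) = r • ((algebraMap O_F K d * c) • u) :=
        smul_comm _ _ _
      rw [this]
      exact Λ.smul_mem _ hu

/-- two full `O_F`-lattices in a free rank-one module `V` over a quadratic
étale `F`-algebra `K` are `K^×`-homothetic if and only if they have the same multiplier
order `O(Λ₁) = O(Λ₂)` and define the same class in the Picard group of that order, the
latter condition being expressed by the existence of an `O(Λ₁)`-linear isomorphism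
`Λ₁ ≃ Λ₂` (both being rank-one projective `O(Λ₁)`-modules). -/
theorem homothetic_iff_same_order_and_picard_class
    (O_F F K V : Type*) [CommRing O_F] [IsDomain O_F] [IsDedekindDomain O_F]
    [Field F] [Algebra O_F F] [IsFractionRing O_F F]
    [CommRing K] [IsSemisimpleRing K] [Algebra F K] [Algebra O_F K]
    [IsScalarTower O_F F K] (hquad : Module.finrank F K = 2)
    [AddCommGroup V] [Module K V] [Module F V] [IsScalarTower F K V]
    [Module O_F V] [IsScalarTower O_F K V] [IsScalarTower O_F F V]
    (b : Basis (Fin 1) K V)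
    (Λ₁ Λ₂ : Submodule O_F V)
    (h₁ : Λ₁.FG ∧ Submodule.span F (Λ₁ : Set V) = ⊤)
    (h₂ : Λ₂.FG ∧ Submodule.span F (Λ₂ : Set V) = ⊤) :
    (∃ a : Kˣ, (Λ₂ : Set V) = (fun x => (a : K) • x) '' (Λ₁ : Set V)) ↔
    (multiplierOrder K Λ₁ = multiplierOrder K Λ₂ ∧
      ∃ f : Λ₁ ≃ₗ[O_F] Λ₂, ∀ a ∈ multiplierOrder K Λ₁, ∀ x : Λ₁,
        ∀ h : a • (x : V) ∈ Λ₁, ((f ⟨a • (x : V), h⟩ : V) = a • ((f x : V)))) := by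
  classical
  have memO : ∀ (Λ : Submodule O_F V) (c : K),
      c ∈ multiplierOrder K Λ ↔ ∀ x ∈ Λ, c • x ∈ Λ := fun _ _ => Iff.rfl
  constructor
  · rintro ⟨u, hu⟩
    have hmem₁ : ∀ x ∈ Λ₁, (u : K) • x ∈ Λ₂ := by
      intro x hx
      show (u : K) • x ∈ (Λ₂ : Set V)
      rw [hu]
      exact ⟨x, hx, rfl⟩
    have hmem₂ : ∀ y ∈ Λ₂, ((u⁻¹ : Kˣ) : K) • y ∈ Λ₁ := by
      intro y hy
      have : y ∈ (fun x => (u : K) • x) '' (Λ₁ : Set V) := hu ▸ hy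
      obtain ⟨x, hx, rfl⟩ := this
      have h' : ((u⁻¹ : Kˣ) : K) • (u : K) • x = x := by
        rw [smul_smul, Units.inv_mul, one_smul]
      simpa [h'] using hx
    constructor
    · ext c
      rw [memO, memO]
      constructor
      · intro hc y hy
        have : y ∈ (fun x => (u : K) • x) '' (Λ₁ : Set V) := hu ▸ hy
        obtain ⟨x, hx, rfl⟩ := this
        have h' : c • (u : K) • x = (u : K) • (c • x) := by
          rw [smul_smul, smul_smul, mul_comm]
        rw [h']
        exact hmem₁ _ (hc x hx)
      · intro hc x hx
        have h1 := hc _ (hmem₁ x hx)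
        have h2 := hmem₂ _ h1
        have h' : ((u⁻¹ : Kˣ) : K) • c • (u : K) • x = c • x := by
          rw [smul_smul, smul_smul]
          congr 1
          rw [mul_comm ((u⁻¹ : Kˣ) : K) c, mul_assoc, Units.inv_mul, mul_one]
        rwa [h'] at h2
    · refine ⟨{ toFun := fun x => ⟨(u : K) • (x : V), hmem₁ _ x.2⟩
                map_add' := fun x y => Subtype.ext (smul_add _ _ _)
                map_smul' := fun r x => Subtype.ext (by
                  show (u : K) • (r • (x : V)) = r • ((u : K) • (x : V))
                  exact smul_comm (u : K) r (x : V))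
                invFun := fun y => ⟨((u⁻¹ : Kˣ) : K) • (y : V), hmem₂ _ y.2⟩
                left_inv := fun x => Subtype.ext (by
                  show ((u⁻¹ : Kˣ) : K) • (u : K) • (x : V) = (x : V)
                  rw [smul_smul, Units.inv_mul, one_smul])
                right_inv := fun y => Subtype.ext (by
                  show (u : K) • ((u⁻¹ : Kˣ) : K) • (y : V) = (y : V)
                  rw [smul_smul, Units.mul_inv, one_smul]) }, ?_⟩
      intro c hc x h
      show (u : K) • (c • (x : V)) = c • ((u : K) • (x : V))
      rw [smul_smul, smul_smul, mul_comm]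
  · rintro ⟨-, f, hf⟩
    set e : V := b 0 with he_def
    have hrep : ∀ v : V, v = (b.repr v 0) • e := by
      intro v
      have h := b.sum_repr v
      rw [Fin.sum_univ_one] at h
      exact h.symm
    have hcoe : ∀ (k : K), b.repr (k • e) 0 = k := by
      intro k
      rw [map_smul]
      simp [he_def, Basis.repr_self]
    obtain ⟨d, hd, hde⟩ := exists_denom Λ₁ h₁.2 e
    set w : V := (f ⟨d • e, hde⟩ : V) with hw
    set μ : K := b.repr w 0 with hμ
    have hdF : algebraMap O_F F d ≠ 0 := fun h =>
      hd (IsFractionRing.injective O_F F (by simpa using h))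
    set lam : K := algebraMap F K (algebraMap O_F F d)⁻¹ * μ with hlam
    have hkey : ∀ (x : V) (hx : x ∈ Λ₁), (f ⟨x, hx⟩ : V) = lam • x := by
      intro x hx
      set c : K := b.repr x 0 with hc
      have hxe : x = c • e := hrep x
      obtain ⟨d', hd', hmul⟩ := exists_scalar_denom Λ₁ h₁.1 h₁.2 c
      have hd'F : algebraMap O_F F d' ≠ 0 := fun h =>
        hd' (IsFractionRing.injective O_F F (by simpa using h))
      set t : K := algebraMap O_F K d' * c with ht
      have htO : t ∈ multiplierOrder K Λ₁ := hmul
      have hmem : t • ((d : O_F) • e) ∈ Λ₁ := hmul _ hde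
      have heq : t • ((d : O_F) • e) = ((d * d' : O_F)) • x := by
        rw [hxe, ← algebraMap_smul K d e, ← algebraMap_smul K (d * d') ((c : K) • e),
          smul_smul, smul_smul, map_mul]
        congr 1
        ring
      have h2 := hf t htO ⟨d • e, hde⟩ hmem
      have h3 : (⟨t • ((d : O_F) • e), hmem⟩ : Λ₁) = (d * d') • (⟨x, hx⟩ : Λ₁) :=
        Subtype.ext heq
      rw [h3] at h2
      have h4 : algebraMap O_F K (d * d') • (f ⟨x, hx⟩ : V) = t • w := by
        rw [← h2, map_smul, algebraMap_smul]
        rfl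
      set q : F := algebraMap O_F F (d * d') with hq
      have hqF : q ≠ 0 := by
        rw [hq, map_mul]
        exact mul_ne_zero hdF hd'F
      have h4' : algebraMap F K q • (f ⟨x, hx⟩ : V) = t • w := by
        rw [← IsScalarTower.algebraMap_apply O_F F K]
        exact h4
      have h5 : (f ⟨x, hx⟩ : V) = algebraMap F K q⁻¹ • (t • w) := by
        have h6 := congrArg (fun v => algebraMap F K q⁻¹ • v) h4'
        simpa [smul_smul, ← map_mul, inv_mul_cancel₀ hqF] using h6
      have hwe : w = μ • e := hrep w
      rw [h5, hwe, hxe, smul_smul, smul_smul, smul_smul]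
      congr 1
      have hscal : (q⁻¹ * algebraMap O_F F d') = (algebraMap O_F F d)⁻¹ := by
        rw [hq, map_mul]
        field_simp
      calc algebraMap F K q⁻¹ * t * μ
          = algebraMap F K (q⁻¹ * algebraMap O_F F d') * (c * μ) := by
            rw [ht, map_mul, IsScalarTower.algebraMap_apply O_F F K d']
            ring
        _ = algebraMap F K (algebraMap O_F F d)⁻¹ * (c * μ) := by rw [hscal]
        _ = lam * c := by rw [hlam]; ring
    have hset : (Λ₂ : Set V) = (fun x => lam • x) '' (Λ₁ : Set V) := by
      ext y
      constructor
      · intro hy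
        refine ⟨((f.symm ⟨y, hy⟩ : Λ₁) : V), (f.symm ⟨y, hy⟩).2, ?_⟩
        have h7 := hkey ((f.symm ⟨y, hy⟩ : Λ₁) : V) (f.symm ⟨y, hy⟩).2
        have h8 : (⟨((f.symm ⟨y, hy⟩ : Λ₁) : V), (f.symm ⟨y, hy⟩).2⟩ : Λ₁)
            = f.symm ⟨y, hy⟩ := rfl
        rw [h8, f.apply_symm_apply] at h7
        exact h7.symm
      · rintro ⟨x, hx, rfl⟩
        show lam • x ∈ (Λ₂ : Set V)
        rw [← hkey x hx]
        exact (f ⟨x, hx⟩).2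
    have hg : ∀ (c : F) (v : V), lam • (c • v) = c • (lam • v) :=
      fun c v => smul_comm lam c v
    let g : V →ₗ[F] V :=
      { toFun := fun v => lam • v
        map_add' := fun v₁ v₂ => smul_add _ _ _
        map_smul' := fun c v => hg c v }
    have hle : Submodule.span F (Λ₂ : Set V) ≤ LinearMap.range g := by
      rw [Submodule.span_le]
      intro y hy
      rw [hset] at hy
      obtain ⟨x, _, rfl⟩ := hy
      exact ⟨x, rfl⟩
    rw [h₂.2] at hle
    obtain ⟨v, hv⟩ : ∃ v, lam • v = e := hle Submodule.mem_top
    have hve : (lam * b.repr v 0) • e = e := by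
      rw [← smul_smul, ← hrep v, hv]
    have hunit : lam * b.repr v 0 = 1 := by
      have h9 := congrArg (fun z => b.repr z 0) hve
      simpa [hcoe, he_def, Basis.repr_self] using h9
    exact ⟨⟨lam, b.repr v 0, hunit, by rw [mul_comm]; exact hunit⟩, hset⟩
end

section
/- Let O_F be a discrete valuation ring with fraction field F, K = F × F, V a free rank-one K-module, and 𝒱 the vertices of the Bruhat–Tits tree of PGL(V). Then the set 𝒱(0) of vertices whose representing lattice has multiplier order O_K = O_F × O_F is the set of classes of the lattices (O_F × p_F^d O_F)·e for d ∈ ℤ, and this set is a line (apartment) in the tree: consecutive lattices are adjacent and all members are distinct vertices. -/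
set_option linter.unusedSectionVars false
set_option maxHeartbeats 1600000


open Module Submodule

/-- The lattice `(O_F × p_F^d O_F)·e` in a free rank-one `F × F`-module, where `π` is a
uniformizer of `O_F` and `d ∈ ℤ` (negative powers taken in `F`). -/
def apartmentLattice (O_F F : Type*) {V : Type*} [CommRing O_F] [Field F]
    [Algebra O_F F] [AddCommGroup V] [Module (F × F) V] [Module O_F V]
    (π : O_F) (d : ℤ) (e : V) : Submodule O_F V :=
  Submodule.span O_F ((fun x : F × F => x • e) ''
    {x : F × F | ∃ a b : O_F,
      x = (algebraMap O_F F a, (algebraMap O_F F π) ^ d * algebraMap O_F F b)})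

lemma mem_multiplierOrder_iff {K O_F V : Type*} [CommRing O_F] [CommRing K]
    [Algebra O_F K] [AddCommGroup V] [Module K V] [Module O_F V]
    [IsScalarTower O_F K V] {Λ : Submodule O_F V} {a : K} :
    a ∈ multiplierOrder K Λ ↔ ∀ x ∈ Λ, a • x ∈ Λ := Iff.rfl

section Aux

open Polynomial

variable {O_F F V : Type*} [CommRing O_F] [IsDomain O_F] [IsDiscreteValuationRing O_F]
    [Field F] [Algebra O_F F] [IsFractionRing O_F F]
    [AddCommGroup V] [Module (F × F) V] [Module F V] [IsScalarTower F (F × F) V]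
    [Module O_F V] [IsScalarTower O_F (F × F) V] [IsScalarTower O_F F V]

variable (b : Basis (Fin 1) (F × F) V) (π : O_F)

local notation "φ" => algebraMap O_F F

lemma repr_smul_e (x : F × F) : b.repr (x • b 0) 0 = x := by simp

lemma coord_inj {x y : F × F} (h : x • b 0 = y • b 0) : x = y := by
  have := congrArg (fun v => b.repr v 0) h
  simpa using this

lemma exists_coord (v : V) : ∃ x : F × F, v = x • b 0 := by
  refine ⟨b.repr v 0, ?_⟩
  have := b.sum_repr v
  rw [Fin.sum_univ_one] at this
  exact this.symm

lemma osmul (r : O_F) (x : F × F) (v : V) :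
    r • (x • v) = ((φ r * x.1, φ r * x.2) : F × F) • v := by
  rw [← smul_assoc]
  congr 1
  exact Prod.ext (by simp [Algebra.smul_def]) (by simp [Algebra.smul_def])

lemma fsmul (c : F) (x : F × F) (v : V) :
    c • (x • v) = ((c * x.1, c * x.2) : F × F) • v := by
  rw [← smul_assoc]
  congr 1

lemma mem_apartmentLattice {d : ℤ} {v : V} :
    v ∈ apartmentLattice O_F F π d (b 0) ↔
    ∃ a c : O_F, v = ((φ a, φ π ^ d * φ c) : F × F) • b 0 := by
  constructor
  · intro hv
    refine Submodule.span_induction ?_ ?_ ?_ ?_ hv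
    · rintro _ ⟨x, ⟨a, c, rfl⟩, rfl⟩; exact ⟨a, c, rfl⟩
    · exact ⟨0, 0, by simp; exact (zero_smul _ _).symm⟩
    · rintro x y - - ⟨a, c, rfl⟩ ⟨a', c', rfl⟩
      refine ⟨a + a', c + c', ?_⟩
      rw [← add_smul]
      congr 1
      exact Prod.ext (by simp) (by simp [mul_add])
    · rintro r x - ⟨a, c, rfl⟩
      refine ⟨r * a, r * c, ?_⟩
      rw [osmul]
      congr 1
      refine Prod.ext (by simp) ?_
      simp only [map_mul]
      ring
  · rintro ⟨a, c, rfl⟩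
    exact Submodule.subset_span ⟨_, ⟨a, c, rfl⟩, rfl⟩

lemma idem_integral : ((1, 0) : F × F) ∈ integralClosure O_F (F × F) := by
  refine ⟨X ^ 2 - X, (monic_X_pow 2).sub_of_left ?_, ?_⟩
  · rw [degree_X_pow, degree_X]; norm_num
  · simp [eval₂_sub, Prod.ext_iff, pow_two]

lemma idem_integral' : ((0, 1) : F × F) ∈ integralClosure O_F (F × F) := by
  refine ⟨X ^ 2 - X, (monic_X_pow 2).sub_of_left ?_, ?_⟩
  · rw [degree_X_pow, degree_X]; norm_num
  · simp [eval₂_sub, Prod.ext_iff, pow_two]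

lemma pair_mem_integralClosure_iff {x y : F} :
    (x, y) ∈ integralClosure O_F (F × F) ↔ (∃ a : O_F, φ a = x) ∧ ∃ c : O_F, φ c = y := by
  constructor
  · intro h
    have h1 : IsIntegral O_F x := (h : IsIntegral O_F ((x, y) : F × F)).map (AlgHom.fst O_F F F)
    have h2 : IsIntegral O_F y := (h : IsIntegral O_F ((x, y) : F × F)).map (AlgHom.snd O_F F F)
    exact ⟨IsIntegrallyClosed.isIntegral_iff.mp h1, IsIntegrallyClosed.isIntegral_iff.mp h2⟩
  · rintro ⟨⟨a, rfl⟩, ⟨c, rfl⟩⟩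
    have : ((φ a, φ c) : F × F) =
        algebraMap O_F (F × F) a * (1, 0) + algebraMap O_F (F × F) c * (0, 1) := by
      simp [Prod.ext_iff]
    rw [this]
    exact add_mem (mul_mem (Subalgebra.algebraMap_mem _ a) idem_integral)
      (mul_mem (Subalgebra.algebraMap_mem _ c) idem_integral')

lemma span_unit_mul (c : O_Fˣ) (x : F) :
    Submodule.span O_F {(φ (↑c : O_F) : F) * x} = Submodule.span O_F {x} := by
  apply le_antisymm
  · rw [Submodule.span_le, Set.singleton_subset_iff, SetLike.mem_coe]
    exact Submodule.mem_span_singleton.mpr ⟨(↑c : O_F), Algebra.smul_def _ _⟩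
  · rw [Submodule.span_le, Set.singleton_subset_iff, SetLike.mem_coe]
    refine Submodule.mem_span_singleton.mpr ⟨(↑c⁻¹ : O_F), ?_⟩
    rw [Algebra.smul_def, ← mul_assoc, ← map_mul]
    simp

lemma fg_submodule_classification (hπ : Irreducible π) (M : Submodule O_F F)
    (hfg : M.FG) (hne : M ≠ ⊥) : ∃ k : ℤ, M = Submodule.span O_F {(φ π : F) ^ k} := by
  have hinj : Function.Injective (φ) := IsFractionRing.injective O_F F
  have hπF : (φ π : F) ≠ 0 := fun h => hπ.ne_zero (hinj (by rw [h, map_zero]))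
  obtain ⟨s, hs⟩ := hfg
  obtain ⟨bd, hbd⟩ := IsLocalization.exist_integer_multiples_of_finset (nonZeroDivisors O_F) s
  set β : F := φ (bd : O_F) with hβ
  have hbd0 : (bd : O_F) ≠ 0 := nonZeroDivisors.coe_ne_zero bd
  have hβ0 : β ≠ 0 := fun h => hbd0 (hinj (by rw [← hβ, h, map_zero]))
  set μ : F →ₗ[O_F] F :=
    { toFun := fun x => β * x
      map_add' := fun x y => mul_add β x y
      map_smul' := fun r x => by simp only [Algebra.smul_def, RingHom.id_apply]; ring } with hμ
  set N : Submodule O_F F := Submodule.map μ M with hN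
  have hNr : N ≤ LinearMap.range (Algebra.linearMap O_F F) := by
    rw [hN, ← hs, Submodule.map_span, Submodule.span_le]
    rintro _ ⟨a, ha, rfl⟩
    obtain ⟨r, hr⟩ := hbd a ha
    exact ⟨r, by change φ r = φ (bd : O_F) * a; simpa [Algebra.smul_def] using hr⟩
  set J : Ideal O_F := Submodule.comap (Algebra.linearMap O_F F) N with hJ
  have hJN : Submodule.map (Algebra.linearMap O_F F) J = N := by
    apply le_antisymm (Submodule.map_comap_le _ _)
    intro x hx
    obtain ⟨a, rfl⟩ := hNr hx
    exact Submodule.mem_map_of_mem (Submodule.mem_comap.mpr hx)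
  obtain ⟨g, hg⟩ := (IsPrincipalIdealRing.principal J).principal
  have hg0 : g ≠ 0 := by
    rintro rfl
    obtain ⟨x, hxM, hx0⟩ := Submodule.ne_bot_iff M |>.mp hne
    have : μ x ∈ N := Submodule.mem_map_of_mem hxM
    rw [← hJN, hg] at this
    simp only [Submodule.span_zero_singleton, Submodule.map_bot, Submodule.mem_bot] at this
    exact mul_ne_zero hβ0 hx0 this
  have hMet : M = Submodule.span O_F {φ g * β⁻¹} := by
    ext x
    have hmem : x ∈ M ↔ β * x ∈ N := by
      constructor
      · intro hx; exact Submodule.mem_map_of_mem hx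
      · rintro ⟨y, hy, hyx⟩
        have : y = x := mul_left_cancel₀ hβ0 hyx
        rwa [← this]
    rw [hmem, ← hJN, hg]
    constructor
    · rintro ⟨r, hr, hrx⟩
      obtain ⟨a, rfl⟩ := Ideal.mem_span_singleton'.mp hr
      refine Submodule.mem_span_singleton.mpr ⟨a, ?_⟩
      have hax : φ a * φ g = β * x := by simpa [map_mul] using hrx
      rw [Algebra.smul_def, ← mul_assoc, hax, mul_comm β x, mul_assoc,
        mul_inv_cancel₀ hβ0, mul_one]
    · intro hx
      obtain ⟨a, ha⟩ := Submodule.mem_span_singleton.mp hx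
      rw [Algebra.smul_def] at ha
      refine ⟨a * g, Ideal.mem_span_singleton'.mpr ⟨a, rfl⟩, ?_⟩
      rw [Algebra.linearMap_apply, map_mul, ← ha]
      field_simp
  obtain ⟨n, u, hgu⟩ := IsDiscreteValuationRing.eq_unit_mul_pow_irreducible hg0 hπ
  obtain ⟨m, w, hbw⟩ := IsDiscreteValuationRing.eq_unit_mul_pow_irreducible hbd0 hπ
  refine ⟨(n : ℤ) - m, ?_⟩
  have hwinv : (φ (↑w⁻¹ : O_F) : F) = (φ (↑w : O_F))⁻¹ :=
    eq_inv_of_mul_eq_one_left (by rw [← map_mul]; simp)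
  have hwF : (φ (↑w : O_F) : F) ≠ 0 :=
    fun h => w.ne_zero (hinj (by rw [h, map_zero]))
  have hkey : φ g * β⁻¹ = φ ↑(u * w⁻¹) * (φ π : F) ^ ((n : ℤ) - m) := by
    rw [hgu, hβ, hbw, Units.val_mul, map_mul, map_mul, map_mul, map_pow, map_pow, hwinv]
    rw [zpow_sub₀ hπF, zpow_natCast, zpow_natCast, mul_inv]
    have hπm : (φ π : F) ^ m ≠ 0 := pow_ne_zero _ hπF
    field_simp
  rw [hMet, hkey]
  exact span_unit_mul (u * w⁻¹) _

/-- first coordinate as an `O_F`-linear map. -/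
noncomputable def coordFst : V →ₗ[O_F] F where
  toFun v := (b.repr v 0).1
  map_add' u v := by simp
  map_smul' r v := by
    obtain ⟨x, rfl⟩ := exists_coord b v
    change ((b.repr (r • x • b 0)) 0).1 = r • ((b.repr (x • b 0)) 0).1
    rw [osmul, repr_smul_e, repr_smul_e]
    simp [Algebra.smul_def]

/-- second coordinate as an `O_F`-linear map. -/
noncomputable def coordSnd : V →ₗ[O_F] F where
  toFun v := (b.repr v 0).2
  map_add' u v := by simp
  map_smul' r v := by
    obtain ⟨x, rfl⟩ := exists_coord b v
    change ((b.repr (r • x • b 0)) 0).2 = r • ((b.repr (x • b 0)) 0).2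
    rw [osmul, repr_smul_e, repr_smul_e]
    simp [Algebra.smul_def]

lemma coordFst_smul_e (x : F × F) : coordFst (O_F := O_F) b (x • b 0) = x.1 := by
  show (b.repr (x • b 0) 0).1 = x.1
  rw [repr_smul_e]

lemma coordSnd_smul_e (x : F × F) : coordSnd (O_F := O_F) b (x • b 0) = x.2 := by
  show (b.repr (x • b 0) 0).2 = x.2
  rw [repr_smul_e]

lemma zpow_pi_eq_unit (hπ : Irreducible π) {k : ℤ} {t : O_F} (ht : IsUnit t)
    (h : (φ π : F) ^ k = φ t) : k = 0 := by
  have hinj : Function.Injective (φ) := IsFractionRing.injective O_F F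
  have hπF : (φ π : F) ≠ 0 := fun h => hπ.ne_zero (hinj (by rw [h, map_zero]))
  by_contra hk
  rcases lt_or_gt_of_ne hk with hneg | hpos
  · -- k < 0
    have h1 : (φ π : F) ^ (-k) * φ t = 1 := by
      rw [← h, ← zpow_add₀ hπF]; simp
    have h2 : (φ π : F) ^ (-k) = φ (π ^ (-k).toNat) := by
      rw [map_pow, ← zpow_natCast, Int.toNat_of_nonneg (by omega)]
    rw [h2, ← map_mul, ← map_one (φ)] at h1
    have h3 : π ^ (-k).toNat * t = 1 := hinj h1
    have : IsUnit (π ^ (-k).toNat) := IsUnit.of_mul_eq_one _ h3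
    exact hπ.not_isUnit ((isUnit_pow_iff (by omega)).mp this)
  · -- k > 0
    have h2 : (φ π : F) ^ k = φ (π ^ k.toNat) := by
      rw [map_pow, ← zpow_natCast, Int.toNat_of_nonneg (by omega)]
    rw [h2] at h
    have h3 : π ^ k.toNat = t := hinj h
    have : IsUnit (π ^ k.toNat) := h3 ▸ ht
    exact hπ.not_isUnit ((isUnit_pow_iff (by omega)).mp this)

end Aux

/-- for `K = F × F`, the vertices of the Bruhat–Tits tree with maximal
multiplier order `O_K = O_F × O_F` are exactly the classes of the lattices
`(O_F × p_F^d O_F)·e`, `d ∈ ℤ`, and these form a line (apartment): consecutive ones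
are adjacent and all of them are pairwise non-homothetic. -/
theorem vertexSetZero_split
    (O_F F V : Type*) [CommRing O_F] [IsDomain O_F] [IsDiscreteValuationRing O_F]
    [Field F] [Algebra O_F F] [IsFractionRing O_F F]
    [AddCommGroup V] [Module (F × F) V] [Module F V] [IsScalarTower F (F × F) V]
    [Module O_F V] [IsScalarTower O_F (F × F) V] [IsScalarTower O_F F V]
    (b : Basis (Fin 1) (F × F) V)
    (π : O_F) (hπ : Irreducible π) :
    -- each `(O_F × p_F^d O_F)·e` is a full lattice with multiplier order `O_F × O_F` ...
    (∀ d : ℤ, (apartmentLattice O_F F π d (b 0) : Submodule O_F V).FG ∧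
      Submodule.span F ((apartmentLattice O_F F π d (b 0) : Submodule O_F V) : Set V) = ⊤ ∧
      multiplierOrder (F × F) (apartmentLattice O_F F π d (b 0)) =
        integralClosure O_F (F × F)) ∧
    -- ... every full lattice with multiplier order `O_F × O_F` is `F^×`-homothetic to
    -- one of them ...
    (∀ Λ : Submodule O_F V, Λ.FG → Submodule.span F (Λ : Set V) = ⊤ →
      multiplierOrder (F × F) Λ = integralClosure O_F (F × F) →
      ∃ (c : Fˣ) (d : ℤ), (Λ : Set V) = (fun x => (c : F) • x) ''
        ((apartmentLattice O_F F π d (b 0) : Submodule O_F V) : Set V)) ∧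
    -- ... consecutive lattices are adjacent vertices ...
    (∀ d : ℤ,
      (IsLocalRing.maximalIdeal O_F) • (apartmentLattice O_F F π d (b 0) : Submodule O_F V) <
        apartmentLattice O_F F π (d + 1) (b 0) ∧
      (apartmentLattice O_F F π (d + 1) (b 0) : Submodule O_F V) <
        apartmentLattice O_F F π d (b 0)) ∧
    -- ... and distinct `d` give distinct vertices.
    (∀ d d' : ℤ,
      (∃ c : Fˣ, ((apartmentLattice O_F F π d' (b 0) : Submodule O_F V) : Set V) =
        (fun x => (c : F) • x) ''
          ((apartmentLattice O_F F π d (b 0) : Submodule O_F V) : Set V)) → d = d') := by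
  classical
  have hinj : Function.Injective (algebraMap O_F F) := IsFractionRing.injective O_F F
  have hπF : (algebraMap O_F F π) ≠ 0 := fun h => hπ.ne_zero (hinj (by rw [h, map_zero]))
  have hzd : ∀ d : ℤ, (algebraMap O_F F π) ^ d ≠ 0 := fun d => zpow_ne_zero d hπF
  have hzz : ∀ k l : ℤ, (algebraMap O_F F π) ^ k * (algebraMap O_F F π) ^ l
      = (algebraMap O_F F π) ^ (k + l) := fun k l => (zpow_add₀ hπF k l).symm
  refine ⟨?_, ?_, ?_, ?_⟩
  -- PART 1
  · intro d
    refine ⟨⟨{((1, 0) : F × F) • b 0, ((0, (algebraMap O_F F π) ^ d) : F × F) • b 0}, ?_⟩,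
      ?_, ?_⟩
    · apply le_antisymm
      · rw [Submodule.span_le]
        intro v hv
        simp only [Finset.coe_insert, Finset.coe_singleton, Set.mem_insert_iff,
          Set.mem_singleton_iff] at hv
        rcases hv with rfl | rfl
        · exact (mem_apartmentLattice b π).mpr ⟨1, 0, by simp⟩
        · exact (mem_apartmentLattice b π).mpr ⟨0, 1, by simp⟩
      · intro v hv
        obtain ⟨a, c, rfl⟩ := (mem_apartmentLattice b π).mp hv
        have hv2 : ((algebraMap O_F F a,
              (algebraMap O_F F π) ^ d * algebraMap O_F F c) : F × F) • b 0
            = a • (((1, 0) : F × F) • b 0)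
              + c • (((0, (algebraMap O_F F π) ^ d) : F × F) • b 0) := by
          rw [osmul, osmul, ← add_smul]
          congr 1
          refine Prod.ext (by simp) ?_
          simp [mul_comm]
        rw [hv2]
        refine add_mem (Submodule.smul_mem _ _ (Submodule.subset_span ?_))
          (Submodule.smul_mem _ _ (Submodule.subset_span ?_)) <;> simp
    · rw [eq_top_iff]
      rintro v -
      obtain ⟨x, rfl⟩ := exists_coord b v
      have h1 : ((1, 0) : F × F) • b 0 ∈ apartmentLattice O_F F π d (b 0) :=
        (mem_apartmentLattice b π).mpr ⟨1, 0, by simp⟩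
      have h2 : ((0, (algebraMap O_F F π) ^ d) : F × F) • b 0
          ∈ apartmentLattice O_F F π d (b 0) :=
        (mem_apartmentLattice b π).mpr ⟨0, 1, by simp⟩
      have hx : x • b 0 = x.1 • (((1, 0) : F × F) • b 0)
          + (x.2 * ((algebraMap O_F F π) ^ d)⁻¹) •
            (((0, (algebraMap O_F F π) ^ d) : F × F) • b 0) := by
        rw [fsmul, fsmul, ← add_smul]
        congr 1
        refine Prod.ext (by simp) ?_
        have := hzd d
        field_simp
        simp
      rw [hx]
      exact add_mem (Submodule.smul_mem _ _ (Submodule.subset_span h1))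
        (Submodule.smul_mem _ _ (Submodule.subset_span h2))
    · refine Subalgebra.ext fun z => ?_
      obtain ⟨x, y⟩ := z
      rw [mem_multiplierOrder_iff, pair_mem_integralClosure_iff]
      constructor
      · intro h
        have hv : ((1, (algebraMap O_F F π) ^ d) : F × F) • b 0
            ∈ apartmentLattice O_F F π d (b 0) :=
          (mem_apartmentLattice b π).mpr ⟨1, 1, by simp⟩
        have h2 := h _ hv
        rw [smul_smul, Prod.mk_mul_mk] at h2
        obtain ⟨a, c, hac⟩ := (mem_apartmentLattice b π).mp h2
        have hxy := coord_inj b hac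
        rw [Prod.mk.injEq] at hxy
        refine ⟨⟨a, by rw [← hxy.1, mul_one]⟩, ⟨c, ?_⟩⟩
        have h3 := hxy.2
        rw [mul_comm y] at h3
        exact (mul_left_cancel₀ (hzd d) h3).symm
      · rintro ⟨⟨a, rfl⟩, ⟨c, rfl⟩⟩
        intro v hv
        obtain ⟨a₁, c₁, rfl⟩ := (mem_apartmentLattice b π).mp hv
        rw [smul_smul, Prod.mk_mul_mk]
        refine (mem_apartmentLattice b π).mpr ⟨a * a₁, c * c₁, ?_⟩
        congr 1
        refine Prod.ext (by simp) ?_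
        simp only [map_mul]
        ring
  -- PART 2
  · intro Λ hFG hspan hMO
    have h10 : ∀ v ∈ Λ, ((1, 0) : F × F) • v ∈ Λ := by
      have h : ((1, 0) : F × F) ∈ multiplierOrder (F × F) Λ := by
        rw [hMO]; exact pair_mem_integralClosure_iff.mpr ⟨⟨1, map_one _⟩, ⟨0, map_zero _⟩⟩
      exact h
    have h01 : ∀ v ∈ Λ, ((0, 1) : F × F) • v ∈ Λ := by
      have h : ((0, 1) : F × F) ∈ multiplierOrder (F × F) Λ := by
        rw [hMO]; exact pair_mem_integralClosure_iff.mpr ⟨⟨0, map_zero _⟩, ⟨1, map_one _⟩⟩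
      exact h
    set M₁ : Submodule O_F F := Submodule.map (coordFst (O_F := O_F) b) Λ with hM₁def
    set M₂ : Submodule O_F F := Submodule.map (coordSnd (O_F := O_F) b) Λ with hM₂def
    have memM₁ : ∀ x : F, x ∈ M₁ ↔ ((x, 0) : F × F) • b 0 ∈ Λ := by
      intro x
      constructor
      · rintro ⟨v, hv, rfl⟩
        obtain ⟨z, rfl⟩ := exists_coord b v
        rw [coordFst_smul_e]
        have h2 := h10 _ hv
        rw [smul_smul] at h2
        have hz : ((1, 0) : F × F) * z = (z.1, 0) := by
          ext <;> simp
        rwa [hz] at h2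
      · intro hx
        exact ⟨_, hx, coordFst_smul_e b _⟩
    have memM₂ : ∀ y : F, y ∈ M₂ ↔ ((0, y) : F × F) • b 0 ∈ Λ := by
      intro y
      constructor
      · rintro ⟨v, hv, rfl⟩
        obtain ⟨z, rfl⟩ := exists_coord b v
        rw [coordSnd_smul_e]
        have h2 := h01 _ hv
        rw [smul_smul] at h2
        have hz : ((0, 1) : F × F) * z = (0, z.2) := by
          ext <;> simp
        rwa [hz] at h2
      · intro hy
        exact ⟨_, hy, coordSnd_smul_e b _⟩
    have memΛ : ∀ v : V, v ∈ Λ ↔ ∃ x y : F, x ∈ M₁ ∧ y ∈ M₂ ∧ v = ((x, y) : F × F) • b 0 := by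
      intro v
      constructor
      · intro hv
        obtain ⟨z, rfl⟩ := exists_coord b v
        exact ⟨z.1, z.2, ⟨_, hv, coordFst_smul_e b _⟩, ⟨_, hv, coordSnd_smul_e b _⟩, by simp⟩
      · rintro ⟨x, y, hx, hy, rfl⟩
        have hx' := (memM₁ x).mp hx
        have hy' := (memM₂ y).mp hy
        have hsum : ((x, y) : F × F) • b 0
            = ((x, 0) : F × F) • b 0 + ((0, y) : F × F) • b 0 := by
          rw [← add_smul]
          norm_num
        rw [hsum]
        exact add_mem hx' hy'
    have hM1 : M₁ ≠ ⊥ := by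
      intro hbot
      have hW : ∀ v ∈ Submodule.span F (Λ : Set V), (b.repr v 0).1 = 0 := by
        intro v hv
        refine Submodule.span_induction ?_ ?_ ?_ ?_ hv
        · intro v hvΛ
          have hmem : coordFst (O_F := O_F) b v ∈ M₁ := ⟨v, hvΛ, rfl⟩
          rw [hbot, Submodule.mem_bot] at hmem
          exact hmem
        · simp
        · intro u v _ _ hu hv
          rw [map_add, Finsupp.add_apply, Prod.fst_add, hu, hv, add_zero]
        · intro c v _ hv
          obtain ⟨z, rfl⟩ := exists_coord b v
          rw [repr_smul_e] at hv
          rw [fsmul, repr_smul_e]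
          simp [hv]
      have hb0 : ((b.repr (b 0) 0) : F × F).1 = 0 := hW _ (by rw [hspan]; trivial)
      rw [Basis.repr_self] at hb0
      simp [Finsupp.single_eq_same] at hb0
    have hM2 : M₂ ≠ ⊥ := by
      intro hbot
      have hW : ∀ v ∈ Submodule.span F (Λ : Set V), (b.repr v 0).2 = 0 := by
        intro v hv
        refine Submodule.span_induction ?_ ?_ ?_ ?_ hv
        · intro v hvΛ
          have hmem : coordSnd (O_F := O_F) b v ∈ M₂ := ⟨v, hvΛ, rfl⟩
          rw [hbot, Submodule.mem_bot] at hmem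
          exact hmem
        · simp
        · intro u v _ _ hu hv
          rw [map_add, Finsupp.add_apply, Prod.snd_add, hu, hv, add_zero]
        · intro c v _ hv
          obtain ⟨z, rfl⟩ := exists_coord b v
          rw [repr_smul_e] at hv
          rw [fsmul, repr_smul_e]
          simp [hv]
      have hb0 : ((b.repr (b 0) 0) : F × F).2 = 0 := hW _ (by rw [hspan]; trivial)
      rw [Basis.repr_self] at hb0
      simp [Finsupp.single_eq_same] at hb0
    obtain ⟨m, hm⟩ := fg_submodule_classification π hπ M₁ (hFG.map _) hM1
    obtain ⟨n, hn⟩ := fg_submodule_classification π hπ M₂ (hFG.map _) hM2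
    refine ⟨(Units.mk0 (algebraMap O_F F π) hπF) ^ m, n - m, ?_⟩
    have hc : ((Units.mk0 (algebraMap O_F F π) hπF ^ m : Fˣ) : F)
        = (algebraMap O_F F π) ^ m := by
      rw [Units.val_zpow_eq_zpow_val, Units.val_mk0]
    ext v
    simp only [Set.mem_image, SetLike.mem_coe]
    constructor
    · intro hv
      obtain ⟨x, y, hx, hy, rfl⟩ := (memΛ _).mp hv
      rw [hm, Submodule.mem_span_singleton] at hx
      obtain ⟨a, ha⟩ := hx
      rw [Algebra.smul_def] at ha
      rw [hn, Submodule.mem_span_singleton] at hy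
      obtain ⟨c, hcy⟩ := hy
      rw [Algebra.smul_def] at hcy
      refine ⟨((algebraMap O_F F a,
          (algebraMap O_F F π) ^ (n - m) * algebraMap O_F F c) : F × F) • b 0,
        (mem_apartmentLattice b π).mpr ⟨a, c, rfl⟩, ?_⟩
      rw [hc, fsmul]
      congr 1
      refine Prod.ext ?_ ?_
      · show (algebraMap O_F F π) ^ m * algebraMap O_F F a = x
        rw [← ha]; ring
      · show (algebraMap O_F F π) ^ m
            * ((algebraMap O_F F π) ^ (n - m) * algebraMap O_F F c) = y
        rw [← mul_assoc, hzz, show m + (n - m) = n by ring, ← hcy, mul_comm]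
    · rintro ⟨w, hw, rfl⟩
      obtain ⟨a, c, rfl⟩ := (mem_apartmentLattice b π).mp hw
      refine (memΛ _).mpr ⟨(algebraMap O_F F π) ^ m * algebraMap O_F F a,
        (algebraMap O_F F π) ^ m
          * ((algebraMap O_F F π) ^ (n - m) * algebraMap O_F F c), ?_, ?_, ?_⟩
      · rw [hm, Submodule.mem_span_singleton]
        exact ⟨a, by rw [Algebra.smul_def]; ring⟩
      · rw [hn, Submodule.mem_span_singleton]
        refine ⟨c, ?_⟩
        rw [Algebra.smul_def, ← mul_assoc, hzz, show m + (n - m) = n by ring]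
        ring
      · rw [hc, fsmul]
  -- PART 3
  · intro d
    have hmax : IsLocalRing.maximalIdeal O_F = Ideal.span {π} :=
      (IsDiscreteValuationRing.irreducible_iff_uniformizer π).mp hπ
    rw [hmax, Submodule.ideal_span_singleton_smul]
    constructor
    · rw [SetLike.lt_iff_le_and_exists]
      constructor
      · intro v hv
        rw [← SetLike.mem_coe, Submodule.coe_pointwise_smul] at hv
        obtain ⟨w, hw, rfl⟩ := hv
        obtain ⟨a, c, rfl⟩ := (mem_apartmentLattice b π).mp hw
        beta_reduce
        rw [osmul]
        refine (mem_apartmentLattice b π).mpr ⟨π * a, c, ?_⟩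
        congr 1
        refine Prod.ext (by simp [map_mul]) ?_
        show algebraMap O_F F π * ((algebraMap O_F F π) ^ d * algebraMap O_F F c)
            = (algebraMap O_F F π) ^ (d + 1) * algebraMap O_F F c
        rw [zpow_add_one₀ hπF]
        ring
      · refine ⟨((1, 0) : F × F) • b 0, (mem_apartmentLattice b π).mpr ⟨1, 0, by simp⟩, ?_⟩
        intro hmem
        rw [← SetLike.mem_coe, Submodule.coe_pointwise_smul] at hmem
        obtain ⟨w, hw, hwe⟩ := hmem
        obtain ⟨a, c, rfl⟩ := (mem_apartmentLattice b π).mp hw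
        beta_reduce at hwe
        rw [osmul] at hwe
        have h1 := coord_inj b hwe
        rw [Prod.mk.injEq] at h1
        have h2 : algebraMap O_F F (π * a) = algebraMap O_F F 1 := by
          rw [map_mul, map_one]
          exact h1.1
        exact hπ.not_isUnit (IsUnit.of_mul_eq_one _ (hinj h2))
    · rw [SetLike.lt_iff_le_and_exists]
      constructor
      · intro v hv
        obtain ⟨a, c, rfl⟩ := (mem_apartmentLattice b π).mp hv
        refine (mem_apartmentLattice b π).mpr ⟨a, π * c, ?_⟩
        congr 1
        refine Prod.ext (by simp) ?_
        show (algebraMap O_F F π) ^ (d + 1) * algebraMap O_F F c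
            = (algebraMap O_F F π) ^ d * algebraMap O_F F (π * c)
        rw [map_mul, zpow_add_one₀ hπF]
        ring
      · refine ⟨((0, (algebraMap O_F F π) ^ d) : F × F) • b 0,
          (mem_apartmentLattice b π).mpr ⟨0, 1, by simp⟩, ?_⟩
        intro hmem
        obtain ⟨a, c, hac⟩ := (mem_apartmentLattice b π).mp hmem
        have h2 := coord_inj b hac
        rw [Prod.mk.injEq] at h2
        have h3 : (algebraMap O_F F π) ^ d * 1
            = (algebraMap O_F F π) ^ d * (algebraMap O_F F π * algebraMap O_F F c) := by
          rw [mul_one, ← mul_assoc, ← zpow_add_one₀ hπF]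
          exact h2.2
        have h4 := mul_left_cancel₀ (hzd d) h3
        have h5 : algebraMap O_F F 1 = algebraMap O_F F (π * c) := by
          rw [map_one, map_mul]
          exact h4
        exact hπ.not_isUnit (IsUnit.of_mul_eq_one _ (hinj h5).symm)
  -- PART 4
  · rintro d d' ⟨c, hset⟩
    have h1 : ((1, 0) : F × F) • b 0
        ∈ (fun x => (c : F) • x) '' (apartmentLattice O_F F π d (b 0) : Set V) := by
      rw [← hset]
      exact (mem_apartmentLattice b π).mpr ⟨1, 0, by simp⟩
    obtain ⟨w, hw, hwe⟩ := h1
    obtain ⟨a', c', rfl⟩ := (mem_apartmentLattice b π).mp hw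
    beta_reduce at hwe
    rw [fsmul] at hwe
    have e1 := coord_inj b hwe
    rw [Prod.mk.injEq] at e1
    have h2 : (((c : F), 0) : F × F) • b 0 ∈ apartmentLattice O_F F π d' (b 0) := by
      rw [← SetLike.mem_coe, hset]
      refine ⟨((1, 0) : F × F) • b 0, (mem_apartmentLattice b π).mpr ⟨1, 0, by simp⟩, ?_⟩
      beta_reduce
      rw [fsmul]
      norm_num
    obtain ⟨a, c₀, hac⟩ := (mem_apartmentLattice b π).mp h2
    have e2 := coord_inj b hac
    rw [Prod.mk.injEq] at e2
    have h3 : ((0, (algebraMap O_F F π) ^ d') : F × F) • b 0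
        ∈ (fun x => (c : F) • x) '' (apartmentLattice O_F F π d (b 0) : Set V) := by
      rw [← hset]
      exact (mem_apartmentLattice b π).mpr ⟨0, 1, by simp⟩
    obtain ⟨w₂, hw₂, hwe₂⟩ := h3
    obtain ⟨a₂, b₂, rfl⟩ := (mem_apartmentLattice b π).mp hw₂
    beta_reduce at hwe₂
    rw [fsmul] at hwe₂
    have e3 := coord_inj b hwe₂
    rw [Prod.mk.injEq] at e3
    have h4 : (((c : F) * algebraMap O_F F 0,
        (c : F) * ((algebraMap O_F F π) ^ d * algebraMap O_F F 1)) : F × F) • b 0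
        ∈ apartmentLattice O_F F π d' (b 0) := by
      rw [← SetLike.mem_coe, hset]
      refine ⟨_, (mem_apartmentLattice b π).mpr ⟨0, 1, rfl⟩, ?_⟩
      beta_reduce
      exact fsmul _ _ _
    obtain ⟨a₃, b₃, hab₃⟩ := (mem_apartmentLattice b π).mp h4
    have e4 := coord_inj b hab₃
    rw [Prod.mk.injEq] at e4
    have key : (algebraMap O_F F π) ^ (d' - d) = algebraMap O_F F (a * b₂) := by
      have h5 : (algebraMap O_F F π) ^ (d' - d) * (algebraMap O_F F π) ^ d
          = (algebraMap O_F F π) ^ d' := by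
        rw [hzz, show d' - d + d = d' by ring]
      have h6 : (algebraMap O_F F π) ^ (d' - d) * (algebraMap O_F F π) ^ d
          = ((c : F) * algebraMap O_F F b₂) * (algebraMap O_F F π) ^ d := by
        rw [h5, ← e3.2]
        ring
      have h7 := mul_right_cancel₀ (hzd d) h6
      rw [map_mul, ← e2.1]
      exact h7
    have ha_unit : IsUnit a := by
      have haa : algebraMap O_F F (a * a') = algebraMap O_F F 1 := by
        rw [map_mul, map_one, ← e2.1]
        exact e1.1
      exact IsUnit.of_mul_eq_one _ (hinj haa)
    have hb₂_unit : IsUnit b₂ := by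
      have h8 := e4.2
      have h9 : (c : F) * (algebraMap O_F F π) ^ d * algebraMap O_F F (b₂ * b₃)
          = (c : F) * (algebraMap O_F F π) ^ d * 1 := by
        rw [map_mul, mul_one]
        calc (c : F) * (algebraMap O_F F π) ^ d * (algebraMap O_F F b₂ * algebraMap O_F F b₃)
            = ((c : F) * ((algebraMap O_F F π) ^ d * algebraMap O_F F b₂))
              * algebraMap O_F F b₃ := by ring
          _ = (algebraMap O_F F π) ^ d' * algebraMap O_F F b₃ := by rw [e3.2]
          _ = (c : F) * ((algebraMap O_F F π) ^ d * algebraMap O_F F 1) := h8.symm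
          _ = (c : F) * (algebraMap O_F F π) ^ d := by rw [map_one, mul_one]
      have h10 := mul_left_cancel₀ (mul_ne_zero (Units.ne_zero c) (hzd d)) h9
      have hbb : b₂ * b₃ = 1 := hinj (by rw [h10, map_one])
      exact IsUnit.of_mul_eq_one _ hbb
    have hk := zpow_pi_eq_unit π hπ (ha_unit.mul hb₂_unit) key
    omega
end

section
/- Let F be a local field with ring of integers O_F and uniformizer generating p_F, let B be the quaternion division algebra over F with its unique maximal order R, and let w : B^× → ℤ be the normalized valuation (so w(B^×) = ℤ and ker(w|units) gives R^× = {b : w(b) = 0}). Let K ⊆ B be a quadratic field extension of F. Then the double coset space K^× \ B^× / R^× has exactly 2 elements if K/F is unramified and exactly 1 element if K/F is ramified. -/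
open Module

open scoped Classical

private lemma aux_inv {F B : Type*} [Field F] [DivisionRing B] [Algebra F B] [FiniteDimensional F B]
    (K : Subalgebra F B) {y : B} (hy : y ∈ K) (hy0 : y ≠ 0) :
    ∃ z ∈ K, y * z = 1 ∧ z * y = 1 := by
  let M := Subalgebra.toSubmodule K
  let g : M →ₗ[F] M := (LinearMap.mulLeft F y).restrict (p := M) (q := M)
    (fun x hx => K.mul_mem hy hx)
  have hgdef : ∀ x : M, (g x : B) = y * (x : B) := fun x => rfl
  have hginj : Function.Injective g := by
    intro a b hab
    have h1 : y * (a : B) = y * (b : B) := by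
      rw [← hgdef a, ← hgdef b, hab]
    exact Subtype.ext (mul_left_cancel₀ hy0 h1)
  have hgsurj : Function.Surjective g := (LinearMap.injective_iff_surjective).mp hginj
  obtain ⟨z, hz⟩ := hgsurj ⟨1, K.one_mem⟩
  have hz' : y * (z : B) = 1 := by
    rw [← hgdef z, hz]
  refine ⟨z, z.2, hz', ?_⟩
  have h2 : (z : B) = y⁻¹ := eq_inv_of_mul_eq_one_right hz'
  rw [h2]
  exact inv_mul_cancel₀ hy0

private lemma aux_dep {F B : Type*} [Field F] [DivisionRing B] [Algebra F B]
    (hdim : Module.finrank F B = 4) (u : B) (hnc : ∃ v : B, u * v ≠ v * u) :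
    ∃ t n : F, u * u = algebraMap F B t * u - algebraMap F B n := by
  have hfd : FiniteDimensional F B := FiniteDimensional.of_finrank_pos (by rw [hdim]; norm_num)
  set K := Algebra.adjoin F {u} with hKdef
  have huK : u ∈ K := Algebra.self_mem_adjoin_singleton F u
  have hcomm : ∀ x ∈ K, ∀ y ∈ K, x * y = y * x := by
    intro x hx y hy
    rw [hKdef, Algebra.adjoin_singleton_eq_range_aeval] at hx hy
    obtain ⟨p, rfl⟩ := hx
    obtain ⟨q, rfl⟩ := hy
    rw [← map_mul, ← map_mul, mul_comm]
  by_contra hcon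
  push_neg at hcon
  -- 1, u, u*u are linearly independent
  have hindep : LinearIndependent F ![1, u, u * u] := by
    rw [Fintype.linearIndependent_iff]
    intro g hg
    rw [Fin.sum_univ_three] at hg
    simp only [Matrix.cons_val_zero, Matrix.cons_val_one, Matrix.head_cons,
      Matrix.cons_val_two, Matrix.tail_cons] at hg
    by_cases h2 : g 2 = 0
    · by_cases h1 : g 1 = 0
      · have h0 : g 0 = 0 := by
          rw [h1, h2] at hg
          simpa using hg
        intro i; fin_cases i <;> assumption
      · exfalso
        obtain ⟨v, hv⟩ := hnc
        apply hv
        have hX : g 1 • u = -(g 0 • (1:B)) := by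
          rw [h2, zero_smul, add_zero] at hg
          exact eq_neg_of_add_eq_zero_right hg
        have h3 := congrArg (fun x => (g 1)⁻¹ • x) hX
        simp only [smul_smul, inv_mul_cancel₀ h1, one_smul] at h3
        have hu : u = algebraMap F B (-((g 1)⁻¹ * g 0)) := by
          rw [h3, Algebra.algebraMap_eq_smul_one]
          match_scalars; ring
        rw [hu, Algebra.commutes]
    · exfalso
      have hX : g 2 • (u*u) = -(g 0 • (1:B) + g 1 • u) := eq_neg_of_add_eq_zero_right hg
      have h3 := congrArg (fun x => (g 2)⁻¹ • x) hX
      simp only [smul_smul, inv_mul_cancel₀ h2, one_smul] at h3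
      refine hcon (-(g 1) / g 2) (g 0 / g 2) ?_
      rw [h3, ← Algebra.smul_def, Algebra.algebraMap_eq_smul_one]
      match_scalars <;> field_simp
  -- the submodule argument
  set M := Subalgebra.toSubmodule K with hMdef
  have hrank3 : 3 ≤ finrank F M := by
    have hspan : Submodule.span F (Set.range ![1, u, u * u]) ≤ M := by
      rw [Submodule.span_le]
      rintro x ⟨i, rfl⟩
      fin_cases i
      · exact K.one_mem
      · exact huK
      · exact K.mul_mem huK huK
    have := finrank_span_eq_card hindep
    simp only [Fintype.card_fin] at this
    calc (3:ℕ) = finrank F (Submodule.span F (Set.range ![1, u, u * u])) := this.symm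
      _ ≤ finrank F M := Submodule.finrank_mono hspan
  obtain ⟨b, hb⟩ : ∃ b : B, b ∉ K := by
    by_contra hall
    push_neg at hall
    obtain ⟨v, hv⟩ := hnc
    exact hv (hcomm u huK v (hall v))
  have hb0 : b ≠ 0 := fun h => hb (h ▸ K.zero_mem)
  have hrinj : Function.Injective (LinearMap.mulRight F b) := by
    intro x y hxy
    simp only [LinearMap.mulRight_apply] at hxy
    exact mul_right_cancel₀ hb0 hxy
  set Mb := M.map (LinearMap.mulRight F b) with hMbdef
  have hrank3' : 3 ≤ finrank F Mb := by
    rw [(Submodule.equivMapOfInjective _ hrinj M).finrank_eq.symm]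
    exact hrank3
  have hdisj : M ⊓ Mb = ⊥ := by
    rw [eq_bot_iff]
    rintro x ⟨hxM, y, hyM, rfl⟩
    simp only [LinearMap.mulRight_apply] at hxM ⊢
    by_cases hy0 : (y : B) = 0
    · simp [hy0]
    · exfalso
      obtain ⟨z, hzK, hyz, hzy⟩ := aux_inv K hyM hy0
      apply hb
      have : b = z * (y * b) := by rw [← mul_assoc, hzy, one_mul]
      rw [this]
      exact K.mul_mem hzK hxM
  have hsum := Submodule.finrank_sup_add_finrank_inf_eq M Mb
  rw [hdisj, finrank_bot] at hsum
  have hle : finrank F ↥(M ⊔ Mb) ≤ finrank F B := Submodule.finrank_le _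
  omega

private lemma aux_norm {F B : Type*} [Field F] [DivisionRing B] [Algebra F B]
    (hdim : Module.finrank F B = 4) (hcentral : Subalgebra.center F B = ⊥)
    (w : Bˣ → ℤ) (hw : ∀ a b : Bˣ, w (a * b) = w a + w b) (u : Bˣ) :
    ∃ ν : Bˣ, (ν : B) ∈ (⊥ : Subalgebra F B) ∧ w ν = 2 * w u := by
  by_cases hc : (u : B) ∈ Subalgebra.center F B
  · refine ⟨u * u, ?_, by rw [hw]; ring⟩
    rw [hcentral] at hc
    exact Subalgebra.mul_mem _ hc hc
  · rw [Subalgebra.mem_center_iff] at hc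
    push_neg at hc
    obtain ⟨v, hv⟩ := hc   -- hv : v * u ≠ u * v
    have hnc : ∃ x : B, (u:B) * x ≠ x * (u:B) := ⟨v, fun h => hv h.symm⟩
    obtain ⟨t, n, hq⟩ := aux_dep hdim (u : B) hnc
    set t' := algebraMap F B t with ht'
    set n' := algebraMap F B n with hn'
    have ct : ∀ x : B, x * t' = t' * x := fun x => (Algebra.commutes t x).symm
    have cn : ∀ x : B, x * n' = n' * x := fun x => (Algebra.commutes n x).symm
    have hn0 : n' ≠ 0 := by
      intro h
      rw [h, sub_zero] at hq
      obtain ⟨x, hx⟩ := hnc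
      apply hx
      have hu : (u:B) = t' := mul_right_cancel₀ (Units.ne_zero u) (by rw [hq])
      rw [hu, ht', Algebra.commutes]
    set c := (u:B) * v - v * (u:B) with hcdef
    have hc0 : c ≠ 0 := fun h => hv (sub_eq_zero.mp h).symm
    have hub : (u:B) * (t' - u) = n' := by
      rw [mul_sub, hq, ct]
      noncomm_ring
    have htu0 : (t' - (u:B)) ≠ 0 := by
      intro h
      rw [h, mul_zero] at hub
      exact hn0 hub.symm
    have h5 : v * (u:B) * (u:B) = t' * (v * (u:B)) - n' * v := by
      rw [mul_assoc, hq, mul_sub, ← mul_assoc, ct v, mul_assoc, cn v]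
    have hkey : (u:B) * c = c * (t' - u) := by
      have lhs : (u:B) * c = t' * ((u:B)*v) - (u:B)*v*(u:B) - n'*v := by
        rw [hcdef, mul_sub, ← mul_assoc, hq]
        noncomm_ring
      have rhs : c * (t' - (u:B)) = t' * ((u:B)*v) - (u:B)*v*(u:B) - n'*v := by
        calc c * (t' - (u:B))
            = (u:B)*v*t' - (u:B)*v*(u:B) - v*(u:B)*t' + v*(u:B)*(u:B) := by
              rw [hcdef]; noncomm_ring
          _ = t' * ((u:B)*v) - (u:B)*v*(u:B) - n'*v := by
              rw [ct, ct, h5]; noncomm_ring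
      rw [lhs, rhs]
    set cu := Units.mk0 c hc0 with hcu
    set du := Units.mk0 (t' - (u:B)) htu0 with hdu
    set nu := Units.mk0 n' hn0 with hnu
    have h6 : u * cu = cu * du := Units.ext (by simpa [hcu, hdu] using hkey)
    have h7 : u * du = nu := Units.ext (by simpa [hdu, hnu] using hub)
    have e6 : w u + w cu = w cu + w du := by rw [← hw, ← hw, h6]
    have e7 : w u + w du = w nu := by rw [← hw, h7]
    refine ⟨nu, ?_, by omega⟩
    rw [Algebra.mem_bot]
    exact ⟨n, rfl⟩

/-- let `F` be a local field (fraction field of a DVR `O_F`), `B` the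
quaternion division algebra over `F` with its unique maximal order `R`, and
`w : B^× → ℤ` the normalized valuation (a surjective homomorphism with
`R^× = {b : w b = 0}`). Let `K ⊆ B` be a quadratic field extension of `F` (a commutative
subalgebra of dimension 2 over `F`). Then the double coset space `K^× \ B^× / R^×` has
exactly 2 elements if `K/F` is unramified (i.e. `w(K^×) ⊆ 2ℤ`) and exactly 1 element if
`K/F` is ramified. -/
theorem quaternion_double_coset_count
    {O_F F B : Type*} [CommRing O_F] [IsDomain O_F] [IsDiscreteValuationRing O_F]
    [Field F] [Algebra O_F F] [IsFractionRing O_F F]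
    [Finite (IsLocalRing.ResidueField O_F)]
    [DivisionRing B] [Algebra F B]
    (hdim : Module.finrank F B = 4) (hcentral : Subalgebra.center F B = ⊥)
    (w : Bˣ → ℤ) (hw : ∀ a b : Bˣ, w (a * b) = w a + w b)
    (hwsurj : Function.Surjective w)
    (S : Subalgebra F B) (hS2 : Module.finrank F S = 2)
    (hScomm : ∀ x ∈ S, ∀ y ∈ S, x * y = y * x) (hSfield : ∀ x ∈ S, x ≠ 0 → x⁻¹ ∈ S) :
    Nat.card (Quot (fun b₁ b₂ : Bˣ =>
        ∃ k r : Bˣ, (k : B) ∈ S ∧ w r = 0 ∧ b₂ = k * b₁ * r)) =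
      if ∀ u : Bˣ, (u : B) ∈ S → Even (w u) then 2 else 1 := by
  classical
  set rel : Bˣ → Bˣ → Prop := fun b₁ b₂ =>
    ∃ k r : Bˣ, (k : B) ∈ S ∧ w r = 0 ∧ b₂ = k * b₁ * r with hreldef
  -- basic facts about w
  have hw1 : w 1 = 0 := by have := hw 1 1; rw [mul_one] at this; omega
  have hwinv : ∀ u : Bˣ, w u⁻¹ = - w u := by
    intro u
    have := hw u u⁻¹
    rw [mul_inv_cancel] at this
    omega
  have hwzpow : ∀ (k : Bˣ) (m : ℤ), w (k ^ m) = m * w k := by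
    intro k m
    induction m using Int.induction_on with
    | zero => simpa using hw1
    | succ n ih => rw [zpow_add_one, hw, ih]; push_cast; ring
    | pred n ih => rw [zpow_sub_one, hw, ih, hwinv]; push_cast; ring
  -- membership of zpow in S
  have hSzpow : ∀ (k : Bˣ), (k : B) ∈ S → ∀ m : ℤ, ((k ^ m : Bˣ) : B) ∈ S := by
    intro k hk m
    rcases m with n | n
    · rw [Int.ofNat_eq_coe, zpow_natCast, Units.val_pow_eq_pow_val]
      exact pow_mem hk n
    · rw [zpow_negSucc, Units.val_inv_eq_inv_val, Units.val_pow_eq_pow_val]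
      exact hSfield _ (pow_mem hk (n + 1)) (pow_ne_zero _ (Units.ne_zero k))
  -- construction of relations
  have hrel_of : ∀ (b₁ b₂ k : Bˣ), (k : B) ∈ S → w k = w b₂ - w b₁ → rel b₁ b₂ := by
    intro b₁ b₂ k hk hwk
    refine ⟨k, b₁⁻¹ * k⁻¹ * b₂, hk, ?_, by group⟩
    rw [hw, hw, hwinv, hwinv]
    omega
  -- the central element of valuation 2
  obtain ⟨u₀, hu₀⟩ := hwsurj 1
  obtain ⟨ν₀, hν₀bot, hν₀w⟩ := aux_norm hdim hcentral w hw u₀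
  rw [hu₀] at hν₀w
  have hν₀S : (ν₀ : B) ∈ S := (bot_le : (⊥ : Subalgebra F B) ≤ S) hν₀bot
  by_cases hall : ∀ u : Bˣ, (u : B) ∈ S → Even (w u)
  · rw [if_pos hall]
    let f : Quot rel → ZMod 2 := Quot.lift (fun b => ((w b : ℤ) : ZMod 2)) (by
      rintro a b ⟨k, r, hk, hr, rfl⟩
      obtain ⟨j, hj⟩ := hall k hk
      show ((w a : ℤ) : ZMod 2) = ((w (k * a * r) : ℤ) : ZMod 2)
      rw [hw, hw, ZMod.intCast_eq_intCast_iff]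
      show _ % _ = _ % _
      omega)
    have hbij : Function.Bijective f := by
      constructor
      · intro x y
        induction x using Quot.ind with | _ a =>
        induction y using Quot.ind with | _ b =>
        intro hab
        have hab' : ((w a : ℤ) : ZMod 2) = ((w b : ℤ) : ZMod 2) := hab
        rw [ZMod.intCast_eq_intCast_iff] at hab'
        have hmod : w a % 2 = w b % 2 := hab'
        obtain ⟨m, hm⟩ : ∃ m : ℤ, w b - w a = 2 * m := ⟨(w b - w a) / 2, by omega⟩
        exact Quot.sound (hrel_of a b (ν₀ ^ m) (hSzpow ν₀ hν₀S m)
          (by rw [hwzpow, hν₀w]; omega))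
      · intro z
        obtain ⟨m, hm⟩ := ZMod.intCast_surjective (n := 2) z
        obtain ⟨b, hb⟩ := hwsurj m
        exact ⟨Quot.mk _ b, by show ((w b : ℤ) : ZMod 2) = z; rw [hb, hm]⟩
    rw [Nat.card_congr (Equiv.ofBijective f hbij)]
    simp [Nat.card_eq_fintype_card]
  · rw [if_neg hall]
    push_neg at hall
    obtain ⟨u₁, hu₁S, hu₁odd⟩ := hall
    rw [Int.not_even_iff_odd] at hu₁odd
    obtain ⟨j, hj⟩ := hu₁odd
    have hsub : ∀ x y : Quot rel, x = y := by
      intro x y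
      induction x using Quot.ind with | _ a =>
      induction y using Quot.ind with | _ b =>
      apply Quot.sound
      by_cases hp : Even (w b - w a)
      · obtain ⟨i, hi⟩ := hp
        exact hrel_of a b (ν₀ ^ ((w b - w a) / 2)) (hSzpow ν₀ hν₀S _)
          (by rw [hwzpow, hν₀w]; omega)
      · rw [Int.not_even_iff_odd] at hp
        obtain ⟨i, hi⟩ := hp
        refine hrel_of a b (ν₀ ^ (i - j) * u₁) ?_ ?_
        · rw [Units.val_mul]
          exact mul_mem (hSzpow ν₀ hν₀S _) hu₁S
        · rw [hw, hwzpow, hν₀w]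
          omega
    have : Subsingleton (Quot rel) := ⟨hsub⟩
    have : Nonempty (Quot rel) := ⟨Quot.mk _ 1⟩
    rw [Nat.card_eq_one_iff_unique]
    exact ⟨‹_›, ‹_›⟩
end
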